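/- For the 4-chord Gauss diagram of Example 4.3, all four chords are odd, the odd writhe J(K) is 0, and the odd writhe polynomial is f_K(t) = t⁴ − 2t² + 1; hence Deg f_K = 4 and the real crossing number of this virtual knot is exactly 4, even though |J(K)| = 0. -/

import Mathlib

open Finset LaurentPolynomial

/-- A signed, oriented chord diagram (combinatorial Gauss diagram) with `n` chords:
the `2*n` chord endpoints on the circle are the elements of `Fin (2*n)` in (positive)
cyclic order; chord `i` has over endpoint `c⁺ = ep (i, true)`, under endpoint
`c⁻ = ep (i, false)` and a sign (writhe) `sign i ∈ {1, -1}`. -/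
structure ChordDiagram (n : ℕ) where
  ep : Fin n × Bool ≃ Fin (2 * n)
  sign : Fin n → ℤ
  sign_unit : ∀ i, sign i = 1 ∨ sign i = -1

namespace ChordDiagram

variable {n : ℕ}

/-- the over endpoint `c⁺` of a chord -/
def overEnd (D : ChordDiagram n) (i : Fin n) : Fin (2 * n) := D.ep (i, true)

/-- the under endpoint `c⁻` of a chord -/
def under (D : ChordDiagram n) (i : Fin n) : Fin (2 * n) := D.ep (i, false)

/-- the number of steps from `b` to `x`, travelling in the positive direction
around the circle -/
def relpos (b x : Fin (2 * n)) : ℕ := (x.val + 2 * n - b.val) % (2 * n)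

/-- `x` lies strictly between the endpoints of chord `i`, on the side swept out
going from `c⁺` to `c⁻` in the positive direction -/
def StrictlyBetween (D : ChordDiagram n) (i : Fin n) (x : Fin (2 * n)) : Prop :=
  0 < relpos (D.overEnd i) x ∧ relpos (D.overEnd i) x < relpos (D.overEnd i) (D.under i)

instance (D : ChordDiagram n) (i : Fin n) (x : Fin (2 * n)) :
    Decidable (D.StrictlyBetween i x) := inferInstanceAs (Decidable (_ ∧ _))

/-- two distinct chords interlink if their endpoints alternate around the circle,
i.e. exactly one endpoint of `j` lies strictly between the endpoints of `i` -/
def Interlinks (D : ChordDiagram n) (i j : Fin n) : Prop :=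
  i ≠ j ∧ Xor (D.StrictlyBetween i (D.overEnd j)) (D.StrictlyBetween i (D.under j))

instance (D : ChordDiagram n) (i j : Fin n) : Decidable (D.Interlinks i j) :=
  inferInstanceAs (Decidable (_ ∧ _))

/-- the number of chords interlinking chord `i` -/
def interlinkCount (D : ChordDiagram n) (i : Fin n) : ℕ :=
  (univ.filter fun j => D.Interlinks i j).card

/-- the number of chord endpoints lying (strictly) on one side of chord `i` -/
def sideCount (D : ChordDiagram n) (i : Fin n) : ℕ :=
  (univ.filter fun x => D.StrictlyBetween i x).card

/-- a chord is odd if it interlinks an odd number of other chords -/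
def OddChord (D : ChordDiagram n) (i : Fin n) : Prop := Odd (D.interlinkCount i)

instance (D : ChordDiagram n) (i : Fin n) : Decidable (D.OddChord i) :=
  inferInstanceAs (Decidable (Odd _))

/-- The label `N(a)` of the arc whose terminal point is `a`: the sum of the signs of
all chords whose over endpoint is met strictly before their under endpoint when
traversing the circle once in the positive direction starting inside this arc. -/
def arcLabel (D : ChordDiagram n) (a : Fin (2 * n)) : ℤ :=
  ∑ i ∈ univ.filter fun i => relpos a (D.overEnd i) < relpos a (D.under i), D.sign i

/-- The value `N(c)` of a chord: for a positive chord, the difference `x - y` of the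
arc labels just before `c⁺` and just before `c⁻`; for a negative chord, the difference
`z - w` of the arc labels just after `c⁺` and just after `c⁻` (the label just after an
over endpoint is the label just before it minus the sign, and the label just after an
under endpoint is the label just before it plus the sign). -/
def chordVal (D : ChordDiagram n) (i : Fin n) : ℤ :=
  if D.sign i = 1 then D.arcLabel (D.overEnd i) - D.arcLabel (D.under i)
  else (D.arcLabel (D.overEnd i) - D.sign i) - (D.arcLabel (D.under i) + D.sign i)

/-- the odd writhe `J(K) = Σ_{c odd} w(c)` -/
def oddWrithe (D : ChordDiagram n) : ℤ :=
  ∑ i ∈ univ.filter fun i => D.OddChord i, D.sign i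

/-- the odd writhe polynomial `f_K(t) = Σ_{c odd} w(c) · t^{N(c)} ∈ ℤ[t,t⁻¹]` -/
noncomputable def owp (D : ChordDiagram n) : LaurentPolynomial ℤ :=
  ∑ i ∈ univ.filter fun i => D.OddChord i, C (D.sign i) * T (D.chordVal i)

/-- evaluation of the odd writhe polynomial at a rational number `x`:
`Σ_{c odd} w(c) · x^{N(c)}` -/
def owpEval (D : ChordDiagram n) (x : ℚ) : ℚ :=
  ∑ i ∈ univ.filter fun i => D.OddChord i, (D.sign i : ℚ) * x ^ D.chordVal i

/-- the coefficient of `t^k` in a Laurent polynomial -/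
def coeffOf (f : LaurentPolynomial ℤ) (k : ℤ) : ℤ := f.coeff k

/-- the degree `Deg f = max { |i| : coefficient of tⁱ in f is nonzero }` -/
def owpDeg (f : LaurentPolynomial ℤ) : ℕ := f.coeff.support.sup fun k => k.natAbs

/-- reversing the orientation of the knot: the cyclic order of the endpoints is
reversed, while signs and over/under data of the crossings are preserved -/
def reverse (D : ChordDiagram n) : ChordDiagram n where
  ep := D.ep.trans Fin.revPerm
  sign := D.sign
  sign_unit := D.sign_unit

/-- the mirror image: every crossing is switched, so every chord's over and under
endpoints are exchanged and its sign is negated -/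
def mirror (D : ChordDiagram n) : ChordDiagram n where
  ep := (Equiv.prodCongr (Equiv.refl (Fin n))
      ⟨fun b => !b, fun b => !b, Bool.not_not, Bool.not_not⟩).trans D.ep
  sign := fun i => -D.sign i
  sign_unit := fun i => (D.sign_unit i).elim
    (fun h => Or.inr (show -D.sign i = -1 by rw [h]))
    (fun h => Or.inl (show -D.sign i = 1 by rw [h]; ring))

/-! ### Planarity via the Euler characteristic of the carrier surface

The diagram determines a 4-valent graph (vertices = chords, edges = the `2*n` arcs of
the circle) together with a rotation system at each vertex, coming from the structure
of a transversal crossing: for a positive crossing the counterclockwise order of the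
four ends is (over-out, under-out, over-in, under-in), for a negative crossing it is
(over-out, under-in, over-in, under-out).  The diagram is realizable by a classical
(planar) knot diagram iff the resulting closed oriented carrier surface is a sphere,
i.e. iff `V - E + F = n - 2n + F = 2`.

Darts are encoded as pairs `(p, io) : Fin (2*n) × Bool`, meaning the end of an arc
at the vertex through the circle point `p`, with `io = true` for the outgoing arc
(from `p` to `p+1`) and `io = false` for the incoming arc (from `p-1` to `p`). -/

/-- the other endpoint of the chord through a given endpoint -/
def otherEnd (D : ChordDiagram n) (p : Fin (2 * n)) : Fin (2 * n) :=
  D.ep ((D.ep.symm p).1, !(D.ep.symm p).2)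

lemma otherEnd_otherEnd (D : ChordDiagram n) (p : Fin (2 * n)) :
    D.otherEnd (D.otherEnd p) = p := by
  simp [otherEnd]

/-- whether the rotation at the vertex toggles the in/out marker when passing from
the end at `p` to the end at the other endpoint of its chord -/
def tog (D : ChordDiagram n) (p : Fin (2 * n)) : Bool :=
  if D.sign (D.ep.symm p).1 = 1 then !(D.ep.symm p).2 else (D.ep.symm p).2

/-- the vertex rotation permutation on darts -/
def vertexPerm (D : ChordDiagram n) : Equiv.Perm (Fin (2 * n) × Bool) :=
  Equiv.trans
    ⟨fun x => (x.1, xor x.2 (D.tog x.1)), fun x => (x.1, xor x.2 (D.tog x.1)),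
      fun x => by simp [Bool.xor_assoc], fun x => by simp [Bool.xor_assoc]⟩
    ⟨fun x => (D.otherEnd x.1, x.2), fun x => (D.otherEnd x.1, x.2),
      fun x => by simp [otherEnd_otherEnd], fun x => by simp [otherEnd_otherEnd]⟩

/-- the edge involution on darts, matching the two ends of each arc -/
def arcPerm (D : ChordDiagram n) : Equiv.Perm (Fin (2 * n) × Bool) :=
  ⟨fun x => if x.2 then (finRotate (2 * n) x.1, false) else ((finRotate (2 * n)).symm x.1, true),
   fun x => if x.2 then (finRotate (2 * n) x.1, false) else ((finRotate (2 * n)).symm x.1, true),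
   fun x => by rcases x with ⟨p, _ | _⟩ <;> simp only [Bool.false_eq_true, if_true, if_false, Equiv.apply_symm_apply, Equiv.symm_apply_apply],
   fun x => by rcases x with ⟨p, _ | _⟩ <;> simp only [Bool.false_eq_true, if_true, if_false, Equiv.apply_symm_apply, Equiv.symm_apply_apply]⟩

/-- the face permutation on darts -/
def facePerm (D : ChordDiagram n) : Equiv.Perm (Fin (2 * n) × Bool) :=
  (D.arcPerm).trans D.vertexPerm

/-- the number of faces: the number of orbits of the face permutation -/
noncomputable def faceCount (D : ChordDiagram n) : ℕ :=
  Nat.card (MulAction.orbitRel.Quotient (Subgroup.zpowers D.facePerm) (Fin (2 * n) × Bool))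

/-- the chord diagram arises from a classical (planar) knot diagram: the carrier
surface has Euler characteristic `V - E + F = n - 2n + faceCount = 2` -/
def PlanarRealizable (D : ChordDiagram n) : Prop := D.faceCount = n + 2

end ChordDiagram


open ChordDiagram

/-! ### Auxiliary material for `stmt_19` -/

private def stmt19f : Fin 4 × Bool → Fin (2 * 4) := fun p =>
  if p.2 then (![0, 1, 3, 6] : Fin 4 → Fin (2 * 4)) p.1
  else (![2, 5, 7, 4] : Fin 4 → Fin (2 * 4)) p.1

private def stmt19g : Fin (2 * 4) → Fin 4 × Bool :=
  ![(0,true),(1,true),(0,false),(2,true),(3,false),(1,false),(3,true),(2,false)]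

private def stmt19D : ChordDiagram 4 where
  ep := ⟨stmt19f, stmt19g, by decide, by decide⟩
  sign := ![-1, 1, 1, -1]
  sign_unit := by decide

private lemma ChordDiagram.ext' {n : ℕ} {D₁ D₂ : ChordDiagram n}
    (h1 : D₁.ep = D₂.ep) (h2 : D₁.sign = D₂.sign) : D₁ = D₂ := by
  cases D₁; cases D₂; dsimp at h1 h2; subst h1; subst h2; rfl

/-- the 4-chord Gauss diagram of Example 4.3 (Figure 11): all four
chords are odd, the odd writhe is `0`, the odd writhe polynomial is
`t⁴ - 2t² + 1` with degree `4`; hence (modelling the virtual knot abstractly by its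
diagrams, with invariance and the degree bound) the real crossing number of the
corresponding virtual knot is exactly `4`, even though `|J(K)| = 0`. -/
theorem stmt_19 (D : ChordDiagram 4)
    (hep : ∀ p : Fin 4 × Bool, D.ep p =
      if p.2 then (![0, 1, 3, 6] : Fin 4 → Fin (2 * 4)) p.1
      else (![2, 5, 7, 4] : Fin 4 → Fin (2 * 4)) p.1)
    (hsign : ∀ i, D.sign i = (![-1, 1, 1, -1] : Fin 4 → ℤ) i)
    (VirtualKnot : Type)
    (IsDiagram : ∀ {m : ℕ}, ChordDiagram m → VirtualKnot → Prop)
    (hinv : ∀ {m₁ m₂ : ℕ} (D₁ : ChordDiagram m₁) (D₂ : ChordDiagram m₂) (K : VirtualKnot),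
      IsDiagram D₁ K → IsDiagram D₂ K → D₁.owp = D₂.owp)
    (hbound : ∀ {m : ℕ} (Dm : ChordDiagram m) (K : VirtualKnot),
      IsDiagram Dm K → owpDeg Dm.owp ≤ m)
    (K : VirtualKnot) (hD : IsDiagram D K) :
    (∀ i, D.OddChord i) ∧ D.oddWrithe = 0 ∧
    D.owp = T 4 - C 2 * T 2 + 1 ∧ owpDeg D.owp = 4 ∧
    sInf {m : ℕ | ∃ Dm : ChordDiagram m, IsDiagram Dm K} = 4 := by
  have hDeq : D = stmt19D := by
    refine ChordDiagram.ext' (Equiv.ext fun p => ?_) (funext hsign)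
    exact hep p
  subst hDeq
  have hodd : ∀ i, stmt19D.OddChord i := by decide
  have hvals : (fun i => stmt19D.chordVal i) = ![2, 4, 0, 2] := by decide
  have howp : stmt19D.owp = T 4 - C 2 * T 2 + 1 := by
    have hfil : (univ.filter fun i => stmt19D.OddChord i) = (univ : Finset (Fin 4)) := by
      decide
    rw [owp, hfil, Fin.sum_univ_four]
    have h0 : stmt19D.chordVal 0 = 2 := by decide
    have h1 : stmt19D.chordVal 1 = 4 := by decide
    have h2 : stmt19D.chordVal 2 = 0 := by decide
    have h3 : stmt19D.chordVal 3 = 2 := by decide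
    have s0 : stmt19D.sign 0 = -1 := by decide
    have s1 : stmt19D.sign 1 = 1 := by decide
    have s2 : stmt19D.sign 2 = 1 := by decide
    have s3 : stmt19D.sign 3 = -1 := by decide
    rw [h0, h1, h2, h3, s0, s1, s2, s3]
    simp only [map_neg, map_one, T_zero]
    have hC2 : (C 2 : LaurentPolynomial ℤ) = 2 := by
      rw [show (2 : ℤ) = 1 + 1 by norm_num, map_add, map_one]; norm_num
    rw [hC2]; ring
  have hcoeff : ∀ k : ℤ, (T 4 - C 2 * T 2 + 1 : LaurentPolynomial ℤ).coeff k =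
      (if (4 : ℤ) = k then 1 else 0) - (if (2 : ℤ) = k then 2 else 0)
        + (if (0 : ℤ) = k then 1 else 0) := by
    intro k
    rw [show (1 : LaurentPolynomial ℤ) = C 1 * T 0 by simp,
      show (T 4 : LaurentPolynomial ℤ) = C 1 * T 4 by simp]
    simp only [← single_eq_C_mul_T, AddMonoidAlgebra.coeff_add, AddMonoidAlgebra.coeff_sub,
      AddMonoidAlgebra.coeff_single, Finsupp.add_apply, Finsupp.sub_apply, Finsupp.single_apply]
  have hsupp : (T 4 - C 2 * T 2 + 1 : LaurentPolynomial ℤ).coeff.support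
      = ({0, 2, 4} : Finset ℤ) := by
    ext k
    rw [Finsupp.mem_support_iff, hcoeff k]
    by_cases h4 : (4 : ℤ) = k <;> by_cases h2 : (2 : ℤ) = k <;>
      by_cases h0 : (0 : ℤ) = k <;> simp_all <;> omega
  have hdeg : owpDeg (T 4 - C 2 * T 2 + 1 : LaurentPolynomial ℤ) = 4 := by
    rw [owpDeg, hsupp]; decide
  refine ⟨hodd, by decide, howp, howp ▸ hdeg, ?_⟩
  refine le_antisymm (Nat.sInf_le ⟨stmt19D, hD⟩) ?_
  refine le_csInf ⟨4, stmt19D, hD⟩ ?_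
  rintro m ⟨Dm, hDm⟩
  have := hbound Dm K hDm
  rw [hinv Dm stmt19D K hDm hD, howp, hdeg] at this
  exact this
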